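/- Fix ε > 0. Any maximal solution x : [0,b) → ℝ of x''(t) = (1+ε) x(t)^ε x'(t) with x(0) = 1, x'(0) = 1 satisfies x'(t) = x(t)^{1+ε} (so long as x(t) ≥ 1) and is defined only on a bounded interval: b = ∫₁^∞ dσ/σ^{1+ε} = 1/ε < +∞. -/

import Mathlib

open Set MeasureTheory

lemma blowup_key (ε : ℝ) (hε : 0 < ε) (b : ℝ) (x x' : ℝ → ℝ)
    (hx : ∀ t ∈ Set.Ico (0:ℝ) b, HasDerivAt x (x' t) t)
    (hx' : ∀ t ∈ Set.Ico (0:ℝ) b, HasDerivAt x' ((1 + ε) * x t ^ ε * x' t) t)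
    (hx0 : x 0 = 1) (hx'0 : x' 0 = 1) :
    ∀ t ∈ Set.Ico (0:ℝ) b, 1 ≤ x t ∧ x' t = x t ^ (1 + ε) := by
  intro t ht
  obtain ⟨ht0, htb⟩ := ht
  have hsub : Set.Icc (0:ℝ) t ⊆ Set.Ico 0 b := fun s hs => ⟨hs.1, lt_of_le_of_lt hs.2 htb⟩
  have hcx : ContinuousOn x (Set.Icc 0 t) :=
    fun s hs => (hx s (hsub hs)).continuousAt.continuousWithinAt
  have hcx' : ContinuousOn x' (Set.Icc 0 t) :=
    fun s hs => (hx' s (hsub hs)).continuousAt.continuousWithinAt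
  -- x' is positive on Icc 0 t
  have hpos : ∀ s ∈ Set.Icc (0:ℝ) t, 0 < x' s := by
    by_contra hcon
    push_neg at hcon
    obtain ⟨s, hs, hs0⟩ := hcon
    have hzero : ∃ u ∈ Set.Icc (0:ℝ) s, x' u = 0 := by
      have := intermediate_value_Icc' hs.1 (hcx'.mono (Set.Icc_subset_Icc_right hs.2))
      have h0 : (0:ℝ) ∈ Set.Icc (x' s) (x' 0) := by
        constructor
        · exact hs0
        · rw [hx'0]; exact zero_le_one
      obtain ⟨u, hu, hu0⟩ := this h0
      exact ⟨u, hu, hu0⟩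
    set S : Set ℝ := {u | u ∈ Set.Icc (0:ℝ) t ∧ x' u = 0} with hS
    have hSne : S.Nonempty := by
      obtain ⟨u, hu, hu0⟩ := hzero
      exact ⟨u, ⟨hu.1, hu.2.trans hs.2⟩, hu0⟩
    have hSclosed : IsClosed S := by
      have h := hcx'.preimage_isClosed_of_isClosed isClosed_Icc
        (isClosed_singleton (x := (0:ℝ)))
      convert h using 1
      rfl

    have hSbdd : BddBelow S := ⟨0, fun u hu => hu.1.1⟩
    set s₀ := sInf S with hs₀def
    have hs₀S : s₀ ∈ S := hSclosed.csInf_mem hSne hSbdd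
    have hs₀0 : 0 < s₀ := by
      rcases lt_or_eq_of_le hs₀S.1.1 with h | h
      · exact h
      · exfalso; have := hs₀S.2; rw [← h, hx'0] at this; exact one_ne_zero this
    have hs₀t : s₀ ≤ t := hs₀S.1.2
    -- x' > 0 on [0, s₀)
    have hpos' : ∀ u ∈ Set.Ico (0:ℝ) s₀, 0 < x' u := by
      intro u hu
      rcases lt_trichotomy (x' u) 0 with h | h | h
      · -- IVT gives a zero in [0,u], below s₀
        have := intermediate_value_Icc' hu.1
          (hcx'.mono (Set.Icc_subset_Icc_right (hu.2.le.trans hs₀t)))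
        obtain ⟨v, hv, hv0⟩ := this ⟨h.le, by rw [hx'0]; exact zero_le_one⟩
        have : s₀ ≤ v := csInf_le hSbdd ⟨⟨hv.1, hv.2.trans (hu.2.le.trans hs₀t)⟩, hv0⟩
        linarith [hv.2, hu.2]
      · exfalso
        have : s₀ ≤ u := csInf_le hSbdd ⟨⟨hu.1, hu.2.le.trans hs₀t⟩, h⟩
        linarith [hu.2]
      · exact h
    -- x is monotone on [0, s₀], so x ≥ 1 there
    have hIccsub : Set.Icc (0:ℝ) s₀ ⊆ Set.Icc 0 t := Set.Icc_subset_Icc_right hs₀t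
    have hmono : MonotoneOn x (Set.Icc 0 s₀) := by
      apply monotoneOn_of_hasDerivWithinAt_nonneg (convex_Icc 0 s₀)
        (hcx.mono hIccsub) (f' := x')
      · intro u hu
        rw [interior_Icc] at hu
        exact ((hx u (hsub (hIccsub ⟨hu.1.le, hu.2.le⟩))).hasDerivWithinAt)
      · intro u hu
        rw [interior_Icc] at hu
        exact (hpos' u ⟨hu.1.le, hu.2⟩).le
    have hxge : ∀ u ∈ Set.Icc (0:ℝ) s₀, 1 ≤ x u := by
      intro u hu
      have := hmono ⟨le_refl 0, hs₀0.le⟩ hu hu.1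
      rwa [hx0] at this
    -- x' is monotone on [0, s₀], so x' s₀ ≥ x' 0 = 1 > 0, contradiction with x' s₀ = 0
    have hmono' : MonotoneOn x' (Set.Icc 0 s₀) := by
      apply monotoneOn_of_hasDerivWithinAt_nonneg (convex_Icc 0 s₀)
        (hcx'.mono hIccsub) (f' := fun u => (1 + ε) * x u ^ ε * x' u)
      · intro u hu
        rw [interior_Icc] at hu
        exact ((hx' u (hsub (hIccsub ⟨hu.1.le, hu.2.le⟩))).hasDerivWithinAt)
      · intro u hu
        rw [interior_Icc] at hu
        have h1 : (1:ℝ) ≤ x u := hxge u ⟨hu.1.le, hu.2.le⟩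
        have h2 : 0 < x u ^ ε := Real.rpow_pos_of_pos (by linarith) ε
        have h3 : 0 < x' u := hpos' u ⟨hu.1.le, hu.2⟩
        positivity
    have := hmono' ⟨le_refl 0, hs₀0.le⟩ ⟨hs₀0.le, le_refl s₀⟩ hs₀0.le
    rw [hx'0, hs₀S.2] at this
    linarith
  -- now x ≥ 1 on Icc 0 t
  have hmono : MonotoneOn x (Set.Icc 0 t) := by
    apply monotoneOn_of_hasDerivWithinAt_nonneg (convex_Icc 0 t) hcx (f' := x')
    · intro u hu
      rw [interior_Icc] at hu
      exact ((hx u (hsub ⟨hu.1.le, hu.2.le⟩)).hasDerivWithinAt)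
    · intro u hu
      rw [interior_Icc] at hu
      exact (hpos u ⟨hu.1.le, hu.2.le⟩).le
  have hxge : ∀ u ∈ Set.Icc (0:ℝ) t, 1 ≤ x u := by
    intro u hu
    have := hmono ⟨le_refl 0, ht0⟩ hu hu.1
    rwa [hx0] at this
  refine ⟨hxge t ⟨ht0, le_refl t⟩, ?_⟩
  -- g = x' - x^(1+ε) is constant 0
  set g : ℝ → ℝ := fun s => x' s - x s ^ (1 + ε) with hg
  have hgderiv : ∀ s ∈ Set.Icc (0:ℝ) t, HasDerivAt g 0 s := by
    intro s hs
    have hxs : (0:ℝ) < x s := lt_of_lt_of_le zero_lt_one (hxge s hs)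
    have h1 : HasDerivAt (fun u => x u ^ (1 + ε))
        (x' s * (1 + ε) * x s ^ (1 + ε - 1)) s :=
      (hx s (hsub hs)).rpow_const (Or.inl hxs.ne')
    have h2 := (hx' s (hsub hs)).sub h1
    convert h2 using 1
    rfl
    rfl
    rfl
    rw [show (1:ℝ) + ε - 1 = ε by ring]
    ring
  have hconst := constant_of_has_deriv_right_zero
    (f := g) (a := 0) (b := t)
    (fun s hs => (hgderiv s hs).continuousAt.continuousWithinAt)
    (fun s hs => ((hgderiv s ⟨hs.1, hs.2.le⟩).hasDerivWithinAt))
  have := hconst t ⟨ht0, le_refl t⟩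
  simp only [hg, hx'0, hx0, Real.one_rpow, sub_self] at this
  linarith [this]

theorem blow_up_velocity_force (ε : ℝ) (hε : 0 < ε) :
    (∀ (b : ℝ) (x x' : ℝ → ℝ),
      (∀ t ∈ Set.Ico (0:ℝ) b, HasDerivAt x (x' t) t) →
      (∀ t ∈ Set.Ico (0:ℝ) b, HasDerivAt x' ((1 + ε) * x t ^ ε * x' t) t) →
      x 0 = 1 → x' 0 = 1 →
      ∀ t ∈ Set.Ico (0:ℝ) b, (1 ≤ x t) → x' t = x t ^ (1 + ε)) ∧
    (¬ ∃ x x' : ℝ → ℝ,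
      (∀ t : ℝ, 0 ≤ t → HasDerivAt x (x' t) t) ∧
      (∀ t : ℝ, 0 ≤ t → HasDerivAt x' ((1 + ε) * x t ^ ε * x' t) t) ∧
      x 0 = 1 ∧ x' 0 = 1) ∧
    (∫ σ in Set.Ioi (1:ℝ), 1 / σ ^ (1 + ε)) = 1 / ε := by
  refine ⟨?_, ?_, ?_⟩
  · intro b x x' hx hx' hx0 hx'0 t ht _
    exact (blowup_key ε hε b x x' hx hx' hx0 hx'0 t ht).2
  · rintro ⟨x, x', hx, hx', hx0, hx'0⟩
    -- from the key lemma: for all t ≥ 0, 1 ≤ x t and x' t = x t ^ (1+ε)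
    have hkey : ∀ t : ℝ, 0 ≤ t → 1 ≤ x t ∧ x' t = x t ^ (1 + ε) := by
      intro t ht
      exact blowup_key ε hε (t + 1) x x'
        (fun s hs => hx s hs.1) (fun s hs => hx' s hs.1) hx0 hx'0 t ⟨ht, by linarith⟩
    -- y = x^(-ε) satisfies y' = -ε, so F = y + ε t is constant
    set F : ℝ → ℝ := fun t => x t ^ (-ε) + ε * t with hF
    have hFderiv : ∀ t : ℝ, 0 ≤ t → HasDerivAt F 0 t := by
      intro t ht
      obtain ⟨h1, h2⟩ := hkey t ht
      have hxt : (0:ℝ) < x t := lt_of_lt_of_le zero_lt_one h1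
      have hy : HasDerivAt (fun s => x s ^ (-ε)) (x' t * (-ε) * x t ^ (-ε - 1)) t :=
        (hx t ht).rpow_const (Or.inl hxt.ne')
      have hl : HasDerivAt (fun s => ε * s) ε t := by simpa using (hasDerivAt_id t).const_mul ε
      have := hy.add hl
      convert this using 1
      rfl
      rfl
      rfl
      rw [h2, show x t ^ (1 + ε) * (-ε) * x t ^ (-ε - 1)
          = (-ε) * (x t ^ (1 + ε) * x t ^ (-ε - 1)) by ring,
        ← Real.rpow_add hxt, show (1 + ε) + (-ε - 1) = 0 by ring, Real.rpow_zero]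
      ring
    have hT : (0:ℝ) < 2 / ε := by positivity
    have hconst := constant_of_has_deriv_right_zero (f := F) (a := 0) (b := 2 / ε)
      (fun s hs => (hFderiv s hs.1).continuousAt.continuousWithinAt)
      (fun s hs => (hFderiv s hs.1).hasDerivWithinAt)
    have hFT := hconst (2 / ε) ⟨hT.le, le_refl _⟩
    have hF0 : F 0 = 1 := by
      simp [hF, hx0, Real.one_rpow]
    have hεT : ε * (2 / ε) = 2 := by field_simp
    have hypos : (0:ℝ) < x (2 / ε) ^ (-ε) :=
      Real.rpow_pos_of_pos (lt_of_lt_of_le zero_lt_one (hkey _ hT.le).1) _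
    rw [hF0] at hFT
    simp only [hF, hεT] at hFT
    linarith
  · have ha : -(1 + ε) < -1 := by linarith
    have h := integral_Ioi_rpow_of_lt ha (one_pos)
    rw [setIntegral_congr_fun measurableSet_Ioi
      (g := fun σ : ℝ => σ ^ (-(1 + ε))) ?_]
    · rw [h, show -(1 + ε) + 1 = -ε by ring, Real.one_rpow]
      field_simp
    · intro σ hσ
      have hσ0 : (0:ℝ) < σ := lt_trans one_pos hσ
      simp only [Real.rpow_neg hσ0.le, one_div]
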